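/- Let Q ⊂ ℝ^n be a full-dimensional simplicial convex polytope with 0 in its interior, with weight function a : V(Q) → ℝ_{>0}. Let u ∈ V(Q) and v ∈ V(Q*) satisfy u ∉ F_v and a(u)(1+⟨v,u⟩) = ε_Q. Let e_1,…,e_n be the vertices of F_v (a basis of ℝ^n), with dual basis (e_1*,…,e_n*), and for j ∈ {1,…,n} let F_j be the unique facet of Q distinct from F_v containing all e_i with i ≠ j. Then for every j ∈ {1,…,n}: u ∈ F_j if and only if ⟨e_j*,u⟩ < 0 (equivalently, u ∉ F_j if and only if ⟨e_j*,u⟩ ≥ 0). -/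

import Mathlib

open Matrix

/-- The polar dual `Q* = {v | ⟨v,u⟩ ≥ -1 for all u ∈ Q}`. -/
def polarDual {n : ℕ} (Q : Set (Fin n → ℝ)) : Set (Fin n → ℝ) :=
  {v | ∀ u ∈ Q, -1 ≤ v ⬝ᵥ u}

/-- The set of numbers `a(u)(1 + ⟨v,u⟩)` for `u ∈ V(Q)`, `v ∈ V(Q*)`, `u ∉ F_v`;
`ε_Q` is its minimum. -/
def epsSet {n : ℕ} (VQ VQd : Finset (Fin n → ℝ)) (a : (Fin n → ℝ) → ℝ) : Set ℝ :=
  {x | ∃ u ∈ VQ, ∃ v ∈ VQd, v ⬝ᵥ u ≠ -1 ∧ x = a u * (1 + v ⬝ᵥ u)}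

/-- Let `(u,v)` realize the minimum `ε_Q`, with `u ∉ F_v`.  Let
`e_1, …, e_n` be the vertices of `F_v`, with dual basis `(e_1*, …, e_n*)`, and for each `j`
let `F_j` be the facet of `Q` distinct from `F_v` containing all `e_i`, `i ≠ j` (with
corresponding dual vertex `v^j ∈ V(Q*)`).  Then for every `j`:
`u ∈ F_j ↔ ⟨e_j*, u⟩ < 0`. -/
private lemma dot_sum_aux {n : ℕ} (w : Fin n → ℝ) (f : Fin n → (Fin n → ℝ)) :
    w ⬝ᵥ (∑ i, f i) = ∑ i, w ⬝ᵥ f i := by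
  simp only [dotProduct, Finset.sum_apply, Finset.mul_sum]
  exact Finset.sum_comm

theorem minimizing_vertex_facet_membership {n : ℕ} (hn : 1 ≤ n)
    (VQ VQd : Finset (Fin n → ℝ))
    -- `VQ` is the vertex set of the polytope `Q = conv(VQ)`
    (hVQ : (VQ : Set (Fin n → ℝ)) =
      Set.extremePoints ℝ (convexHull ℝ (VQ : Set (Fin n → ℝ))))
    -- `0` lies in the interior of `Q` (in particular `Q` is full-dimensional)
    (h0 : (0 : Fin n → ℝ) ∈ interior (convexHull ℝ (VQ : Set (Fin n → ℝ))))
    -- `VQd` is the vertex set of the polar dual `Q*`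
    (hVQd : (VQd : Set (Fin n → ℝ)) =
      Set.extremePoints ℝ (polarDual (convexHull ℝ (VQ : Set (Fin n → ℝ)))))
    -- `Q` is simplicial: every facet has exactly `n` vertices
    (hsimp : ∀ v ∈ VQd, (VQ.filter fun u => v ⬝ᵥ u = -1).card = n)
    -- the weight function `a : V(Q) → ℝ_{>0}`
    (a : (Fin n → ℝ) → ℝ) (ha : ∀ u ∈ VQ, 0 < a u)
    -- `ε` is the minimum `ε_Q`
    (ε : ℝ) (hε : IsLeast (epsSet VQ VQd a) ε)
    -- `(u, v)` realizes the minimum, with `u ∉ F_v`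
    (u v : Fin n → ℝ) (hu : u ∈ VQ) (hv : v ∈ VQd)
    (huFv : v ⬝ᵥ u ≠ -1) (hmin : a u * (1 + v ⬝ᵥ u) = ε)
    -- `e_1, …, e_n` are the vertices of the facet `F_v`
    (e : Fin n → (Fin n → ℝ)) (he : Function.Injective e)
    (heV : ∀ i, e i ∈ VQ) (heF : ∀ i, v ⬝ᵥ e i = -1)
    (heAll : ∀ w ∈ VQ, v ⬝ᵥ w = -1 → ∃ i, w = e i)
    -- `(e_1*, …, e_n*)` is the dual basis of `(e_1, …, e_n)`
    (estar : Fin n → (Fin n → ℝ))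
    (hestar : ∀ i k, estar i ⬝ᵥ e k = if i = k then 1 else 0)
    -- for each `j`, `F_j` is the facet of `Q` distinct from `F_v` containing all `e_i`,
    -- `i ≠ j`; its corresponding dual vertex is `vj j ∈ V(Q*)`
    (vj : Fin n → (Fin n → ℝ)) (hvj : ∀ j, vj j ∈ VQd) (hvjne : ∀ j, vj j ≠ v)
    (hvje : ∀ j i, i ≠ j → vj j ⬝ᵥ e i = -1) :
    ∀ j, (vj j ⬝ᵥ u = -1 ↔ estar j ⬝ᵥ u < 0) := by
  classical
  haveI : Nonempty (Fin n) := ⟨⟨0, hn⟩⟩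
  -- `e` is linearly independent, hence a basis
  have hli : LinearIndependent ℝ e := by
    rw [Fintype.linearIndependent_iff]
    intro g hg i
    have h := congrArg (fun x => estar i ⬝ᵥ x) hg
    simpa [dot_sum_aux, dotProduct_smul, hestar] using h
  let b : Module.Basis (Fin n) ℝ (Fin n → ℝ) :=
    basisOfLinearIndependentOfCardEqFinrank hli (by simp)
  have hb : ∀ i, b i = e i := fun i => by
    simp [b, coe_basisOfLinearIndependentOfCardEqFinrank]
  have hsum : ∀ x : Fin n → ℝ, ∑ i, b.repr x i • e i = x := by
    intro x
    have h := b.sum_repr x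
    simpa [hb] using h
  have hexp : ∀ w x : Fin n → ℝ, w ⬝ᵥ x = ∑ i, (b.repr x i) * (w ⬝ᵥ e i) := by
    intro w x
    conv_lhs => rw [← hsum x]
    rw [dot_sum_aux]
    refine Finset.sum_congr rfl fun i _ => ?_
    rw [dotProduct_smul]
    simp [mul_comm]
  have hstar : ∀ k (x : Fin n → ℝ), estar k ⬝ᵥ x = b.repr x k := by
    intro k x
    rw [hexp (estar k) x]
    simp [hestar]
  -- agreement on the basis implies equality
  have heq : ∀ w w' : Fin n → ℝ, (∀ i, w ⬝ᵥ e i = w' ⬝ᵥ e i) → w = w' := by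
    intro w w' h
    have h0' : ∀ i, (w - w') ⬝ᵥ e i = 0 := by
      intro i; rw [sub_dotProduct, h i, sub_self]
    have hz : (w - w') ⬝ᵥ (w - w') = 0 := by
      rw [hexp (w - w') (w - w')]
      simp [h0']
    exact sub_eq_zero.mp (dotProduct_self_eq_zero.mp hz)
  -- vertices of the dual polytope pair to at least -1 with vertices of Q
  have hpolar : ∀ w ∈ VQd, ∀ x ∈ VQ, -1 ≤ w ⬝ᵥ x := by
    intro w hw x hx
    have hw' : w ∈ polarDual (convexHull ℝ (VQ : Set (Fin n → ℝ))) := by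
      have hmem : w ∈ (VQd : Set (Fin n → ℝ)) := hw
      rw [hVQd] at hmem
      exact extremePoints_subset hmem
    exact hw' x (subset_convexHull ℝ _ hx)
  have hvu : -1 < v ⬝ᵥ u := lt_of_le_of_ne (hpolar v hv u hu) (Ne.symm huFv)
  intro j
  have hcj : estar j ⬝ᵥ u = b.repr u j := hstar j u
  -- t := vj j ⬝ᵥ e j is > -1 (else vj j = v)
  have ht : -1 < vj j ⬝ᵥ e j := by
    refine lt_of_le_of_ne (hpolar _ (hvj j) _ (heV j)) ?_
    intro h
    apply hvjne j
    apply heq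
    intro i
    by_cases hij : i = j
    · rw [hij, heF, ← h]
    · rw [hvje j i hij, heF]
  -- the key identity
  have h1 : v ⬝ᵥ u = -∑ i, b.repr u i := by
    rw [hexp v u]
    simp [heF]
  have h2 : vj j ⬝ᵥ u = (-∑ i, b.repr u i) + b.repr u j * (1 + vj j ⬝ᵥ e j) := by
    rw [hexp (vj j) u]
    have step : ∀ i ∈ Finset.univ, (b.repr u i) * (vj j ⬝ᵥ e i) =
        -(b.repr u i) + (if i = j then b.repr u j * (1 + vj j ⬝ᵥ e j) else 0) := by
      intro i _
      by_cases hij : i = j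
      · subst hij
        rw [if_pos rfl]
        ring
      · rw [hvje j i hij, if_neg hij]
        ring
    rw [Finset.sum_congr rfl step, Finset.sum_add_distrib,
      Finset.sum_ite_eq' Finset.univ j (fun _ => b.repr u j * (1 + vj j ⬝ᵥ e j)),
      if_pos (Finset.mem_univ j), Finset.sum_neg_distrib]
  have hkey : vj j ⬝ᵥ u = v ⬝ᵥ u + b.repr u j * (1 + vj j ⬝ᵥ e j) := by
    rw [h1, h2]
  have hau : 0 < a u := ha u hu
  have h1t : 0 < 1 + vj j ⬝ᵥ e j := by linarith
  rw [hcj]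
  constructor
  · intro hF
    rw [hF] at hkey
    by_contra hcge
    push_neg at hcge
    have : 0 ≤ b.repr u j * (1 + vj j ⬝ᵥ e j) := mul_nonneg hcge (le_of_lt h1t)
    linarith
  · intro hcneg
    by_contra hne
    have hmem : a u * (1 + vj j ⬝ᵥ u) ∈ epsSet VQ VQd a :=
      ⟨u, hu, vj j, hvj j, hne, rfl⟩
    have hle : ε ≤ a u * (1 + vj j ⬝ᵥ u) := hε.2 hmem
    have heqv : a u * (1 + vj j ⬝ᵥ u) = ε + (a u * (1 + vj j ⬝ᵥ e j)) * b.repr u j := by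
      rw [hkey, ← hmin]; ring
    have hneg : (a u * (1 + vj j ⬝ᵥ e j)) * b.repr u j < 0 :=
      mul_neg_of_pos_of_neg (mul_pos hau h1t) hcneg
    linarith
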